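/- The power series H/q ∈ K[[q]] has constant term 1, and log(H/q) = Σ_{m≥1} (1/m)·[z^{m}]{Q(z)^m}·q^m; equivalently H = q·exp(Σ_{m≥1} (1/m)·[z^{m}]{Q(z)^m}·q^m). (This is the logarithmic form of the Lagrange inversion formula for the solution of H = q·Q(H).) -/

import Mathlib

open PowerSeries

/-- Composition `Q ∘ h` of formal power series, intended for `h` with zero constant
term (then `coeff n (h^k) = 0` for `k > n`, so the finite truncation below is the
honest composition / substitution of `h` into `Q`). -/
noncomputable def pcomp {K : Type*} [Field K] (Q h : PowerSeries K) : PowerSeries K :=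
  PowerSeries.mk fun n => ∑ k ∈ Finset.range (n + 1),
    PowerSeries.coeff k Q * PowerSeries.coeff n (h ^ k)

/-- The exponential series `Σ_{n≥0} z^n/n!`. -/
noncomputable def expSeries (K : Type*) [Field K] [CharZero K] : PowerSeries K :=
  PowerSeries.mk fun n => ((n.factorial : K))⁻¹

/-- The logarithm series `Σ_{m≥1} (−1)^{m+1} z^m/m` (its coefficient at `m = 0`
vanishes since `(0 : K)⁻¹ = 0`). -/
noncomputable def logSeries (K : Type*) [Field K] [CharZero K] : PowerSeries K :=
  PowerSeries.mk fun n => (-1) ^ (n + 1) * (n : K)⁻¹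

/-- The formal exponential `exp f` of a power series `f` with zero constant term. -/
noncomputable def expS {K : Type*} [Field K] [CharZero K] (f : PowerSeries K) : PowerSeries K :=
  pcomp (expSeries K) f

/-- The formal logarithm `log f = Σ_{m≥1} (−1)^{m+1}(f−1)^m/m` of a power series `f`
with constant term `1`. -/
noncomputable def logS {K : Type*} [Field K] [CharZero K] (f : PowerSeries K) : PowerSeries K :=
  pcomp (logSeries K) (f - 1)

namespace LagAux

open Finset

variable {K : Type*} [Field K]

lemma coeff_pow_eq_zero {h : PowerSeries K} (h0 : constantCoeff h = 0)
    {n k : ℕ} (hk : n < k) : coeff n (h ^ k) = 0 := by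
  have : (X : K⟦X⟧) ^ k ∣ h ^ k := pow_dvd_pow_of_dvd (X_dvd_iff.mpr h0) k
  exact X_pow_dvd_iff.mp this n hk

lemma coeff_pcomp (A h : PowerSeries K) (n : ℕ) :
    coeff n (pcomp A h) = ∑ k ∈ range (n + 1), coeff k A * coeff n (h ^ k) := by
  simp [pcomp]

lemma coeff_pcomp_of_lt {h : PowerSeries K} (h0 : constantCoeff h = 0)
    (A : PowerSeries K) {n N : ℕ} (hN : n < N) :
    coeff n (pcomp A h) = ∑ k ∈ range N, coeff k A * coeff n (h ^ k) := by
  rw [coeff_pcomp]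
  refine Finset.sum_subset (Finset.range_subset_range.mpr hN) fun k _ hk => ?_
  rw [mem_range, not_lt] at hk
  rw [coeff_pow_eq_zero h0 (Nat.lt_of_succ_le hk), mul_zero]

lemma constantCoeff_pcomp (A h : PowerSeries K) :
    constantCoeff (pcomp A h) = constantCoeff A := by
  rw [← coeff_zero_eq_constantCoeff, coeff_pcomp]
  simp

lemma coeff_aeval {h : PowerSeries K} (h0 : constantCoeff h = 0)
    (P : Polynomial K) (n : ℕ) :
    coeff n (Polynomial.aeval h P) = ∑ k ∈ range (n + 1), P.coeff k * coeff n (h ^ k) := by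
  have hd : P.natDegree < max (P.natDegree + 1) (n + 1) :=
    lt_of_lt_of_le (Nat.lt_succ_self _) (le_max_left _ _)
  rw [Polynomial.aeval_eq_sum_range' hd, map_sum]
  simp_rw [LinearMap.map_smul, smul_eq_mul]
  symm
  refine Finset.sum_subset (Finset.range_subset_range.mpr (le_max_right _ _)) fun k _ hk => ?_
  rw [mem_range, not_lt] at hk
  rw [coeff_pow_eq_zero h0 (Nat.lt_of_succ_le hk), mul_zero]

lemma coeff_aeval_trunc {h : PowerSeries K} (h0 : constantCoeff h = 0)
    (A : PowerSeries K) {n N : ℕ} (hN : n < N) :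
    coeff n (Polynomial.aeval h (trunc N A)) = coeff n (pcomp A h) := by
  rw [coeff_aeval h0, coeff_pcomp_of_lt h0 A (Nat.lt_succ_self n)]
  refine Finset.sum_congr rfl fun k hk => ?_
  rw [mem_range] at hk
  rw [coeff_trunc, if_pos (lt_of_lt_of_le hk (Nat.succ_le_of_lt hN))]

lemma pcomp_mul {h : PowerSeries K} (h0 : constantCoeff h = 0) (A B : PowerSeries K) :
    pcomp (A * B) h = pcomp A h * pcomp B h := by
  ext n
  have e1 : coeff n (pcomp (A * B) h)
      = coeff n (Polynomial.aeval h (trunc (n + 1) A * trunc (n + 1) B)) := by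
    rw [coeff_pcomp, coeff_aeval h0]
    refine Finset.sum_congr rfl fun k hk => ?_
    rw [mem_range, Nat.lt_succ_iff] at hk
    congr 1
    rw [Polynomial.coeff_mul, PowerSeries.coeff_mul]
    refine Finset.sum_congr rfl fun p hp => ?_
    rw [HasAntidiagonal.mem_antidiagonal] at hp
    rw [coeff_trunc, coeff_trunc,
      if_pos (Nat.lt_succ_of_le (le_trans (le_trans (Nat.le_add_right _ _) hp.le) hk)),
      if_pos (Nat.lt_succ_of_le (le_trans (le_trans (Nat.le_add_left _ _) hp.le) hk))]
  rw [e1, map_mul, PowerSeries.coeff_mul, PowerSeries.coeff_mul]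
  refine Finset.sum_congr rfl fun p hp => ?_
  rw [HasAntidiagonal.mem_antidiagonal] at hp
  rw [coeff_aeval_trunc h0 A (Nat.lt_succ_of_le (hp ▸ Nat.le_add_right _ _)),
    coeff_aeval_trunc h0 B (Nat.lt_succ_of_le (hp ▸ Nat.le_add_left _ _))]

lemma pcomp_one (h : PowerSeries K) : pcomp 1 h = 1 := by
  ext n
  rw [coeff_pcomp]
  rcases n with _ | m
  · simp
  · rw [Finset.sum_eq_single 0]
    · simp
    · intro k _ hk
      rw [PowerSeries.coeff_one, if_neg hk, zero_mul]
    · simp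

lemma pcomp_add (A B h : PowerSeries K) : pcomp (A + B) h = pcomp A h + pcomp B h := by
  ext n
  rw [map_add, coeff_pcomp, coeff_pcomp, coeff_pcomp, ← Finset.sum_add_distrib]
  exact Finset.sum_congr rfl fun k _ => by rw [map_add, add_mul]

lemma pcomp_X {h : PowerSeries K} (h0 : constantCoeff h = 0) : pcomp X h = h := by
  ext n
  rw [coeff_pcomp]
  rcases n with _ | m
  · simpa [PowerSeries.coeff_X] using h0.symm
  · rw [Finset.sum_eq_single 1]
    · simp [PowerSeries.coeff_X]
    · intro k _ hk
      rw [PowerSeries.coeff_X, if_neg hk, zero_mul]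
    · intro hm
      simp at hm

lemma pcomp_pow {h : PowerSeries K} (h0 : constantCoeff h = 0) (A : PowerSeries K) (j : ℕ) :
    pcomp (A ^ j) h = pcomp A h ^ j := by
  induction j with
  | zero => simpa using pcomp_one h
  | succ m ih => rw [pow_succ, pow_succ, pcomp_mul h0, ih]

lemma pcomp_inv {h : PowerSeries K} (h0 : constantCoeff h = 0)
    {A : PowerSeries K} (hA : constantCoeff A ≠ 0) :
    pcomp A⁻¹ h = (pcomp A h)⁻¹ := by
  have hpA : constantCoeff (pcomp A h) ≠ 0 := by rw [constantCoeff_pcomp]; exact hA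
  have hAA : A⁻¹ * A = 1 := by rw [mul_comm]; exact PowerSeries.mul_inv_cancel A hA
  rw [eq_comm, PowerSeries.inv_eq_iff_mul_eq_one hpA, ← pcomp_mul h0, hAA, pcomp_one]

lemma coeff_X_mul_derivative (F : PowerSeries K) (m : ℕ) :
    coeff m (X * d⁄dX K F) = (m : K) * coeff m F := by
  rcases m with _ | m
  · rw [coeff_zero_eq_constantCoeff, map_mul, constantCoeff_X, zero_mul,
      Nat.cast_zero, zero_mul]
  · rw [coeff_succ_X_mul, coeff_derivative]
    push_cast
    ring

lemma coeff_pow_mul_deriv (h : PowerSeries K) (k n : ℕ) :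
    ((k : K) + 1) * coeff n (h ^ k * d⁄dX K h)
      = ((n : K) + 1) * coeff (n + 1) (h ^ (k + 1)) := by
  have e : d⁄dX K (h ^ (k + 1)) = (k + 1) • (h ^ k * d⁄dX K h) := by
    have := Derivation.leibniz_pow (d⁄dX K) (a := h) (k + 1)
    simpa [smul_eq_mul] using this
  have e2 := congrArg (coeff n) e
  rw [coeff_derivative, map_nsmul, nsmul_eq_mul] at e2
  push_cast at e2 ⊢
  linear_combination -e2

lemma coeff_pcomp_mul {h : PowerSeries K} (h0 : constantCoeff h = 0)
    (A g : PowerSeries K) (n : ℕ) :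
    coeff n (pcomp A h * g) = ∑ k ∈ range (n + 1), coeff k A * coeff n (h ^ k * g) := by
  calc coeff n (pcomp A h * g)
      = ∑ p ∈ antidiagonal n, ∑ k ∈ range (n + 1),
          coeff k A * (coeff p.1 (h ^ k) * coeff p.2 g) := by
        rw [PowerSeries.coeff_mul]
        refine Finset.sum_congr rfl fun p hp => ?_
        rw [HasAntidiagonal.mem_antidiagonal] at hp
        rw [coeff_pcomp_of_lt h0 A (Nat.lt_succ_of_le (hp ▸ Nat.le_add_right _ _)),
          Finset.sum_mul]
        exact Finset.sum_congr rfl fun k _ => by ring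
    _ = ∑ k ∈ range (n + 1), ∑ p ∈ antidiagonal n,
          coeff k A * (coeff p.1 (h ^ k) * coeff p.2 g) := Finset.sum_comm
    _ = ∑ k ∈ range (n + 1), coeff k A * coeff n (h ^ k * g) := by
        refine Finset.sum_congr rfl fun k _ => ?_
        rw [← Finset.mul_sum, PowerSeries.coeff_mul]

lemma pcomp_derivative {h : PowerSeries K} (h0 : constantCoeff h = 0)
    (A : PowerSeries K) :
    d⁄dX K (pcomp A h) = pcomp (d⁄dX K A) h * d⁄dX K h := by
  ext n
  rw [coeff_derivative, coeff_pcomp_of_lt h0 A (Nat.lt_succ_self (n + 1)),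
    coeff_pcomp_mul h0]
  rw [Finset.sum_range_succ']
  rw [pow_zero, PowerSeries.coeff_one, if_neg (Nat.succ_ne_zero n), mul_zero, add_zero,
    Finset.sum_mul]
  refine Finset.sum_congr rfl fun k _ => ?_
  rw [coeff_derivative]
  have := coeff_pow_mul_deriv h k n
  push_cast at this ⊢
  linear_combination (-(coeff (k + 1) A)) * this

lemma leibniz_pow' (Q : PowerSeries K) (j : ℕ) :
    d⁄dX K (Q ^ j) = j • (Q ^ (j - 1) * d⁄dX K Q) := by
  simpa [smul_eq_mul] using Derivation.leibniz_pow (d⁄dX K) (a := Q) j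

lemma lagrange [CharZero K] (Q H : PowerSeries K)
    (hQ1 : constantCoeff Q = 1) (hH0 : constantCoeff H = 0)
    (hH : H = X * pcomp Q H) :
    ∀ n j : ℕ, 1 ≤ j → j ≤ n →
      (n : K) * coeff n (H ^ j) = (j : K) * coeff (n - j) (Q ^ n) := by
  intro n
  induction n using Nat.strong_induction_on with
  | _ n IH =>
  intro j hj1 hjn
  have hQn1 : ∀ s : ℕ, constantCoeff (Q ^ s) = 1 := fun s => by
    rw [map_pow, hQ1, one_pow]
  have hHj : coeff n (H ^ j) = coeff (n - j) (pcomp (Q ^ j) H) := by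
    conv_lhs => rw [hH]
    rw [mul_pow, ← pcomp_pow hH0, coeff_X_pow_mul', if_pos hjn]
  rcases hjn.eq_or_lt with rfl | hlt
  · rw [hHj, Nat.sub_self, coeff_zero_eq_constantCoeff, constantCoeff_pcomp]
  · -- j < n
    set r := n - j with hr
    have hrpos : 0 < r := Nat.sub_pos_of_lt hlt
    have hrK : (r : K) ≠ 0 := Nat.cast_ne_zero.mpr hrpos.ne'
    have hnK : (n : K) ≠ 0 := Nat.cast_ne_zero.mpr (by omega : n ≠ 0)
    set T : PowerSeries K := X * (d⁄dX K Q * Q ^ (n - 1)) with hT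
    set c : K := coeff r T with hc
    have hA : ∑ m ∈ range (r + 1), (m : K) * coeff m (Q ^ j) * coeff (r - m) (Q ^ r)
        = (j : K) * c := by
      have h3 : X * d⁄dX K (Q ^ j) * Q ^ r = j • T := by
        rw [leibniz_pow' Q j, mul_smul_comm, smul_mul_assoc]
        congr 1
        calc X * (Q ^ (j - 1) * d⁄dX K Q) * Q ^ r
            = X * (d⁄dX K Q * (Q ^ (j - 1) * Q ^ r)) := by ring
          _ = T := by rw [← pow_add, show j - 1 + r = n - 1 by omega, hT]
      calc ∑ m ∈ range (r + 1), (m : K) * coeff m (Q ^ j) * coeff (r - m) (Q ^ r)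
          = coeff r (X * d⁄dX K (Q ^ j) * Q ^ r) := by
            rw [PowerSeries.coeff_mul, Finset.Nat.sum_antidiagonal_eq_sum_range_succ_mk]
            exact Finset.sum_congr rfl fun m _ => by
              rw [coeff_X_mul_derivative, mul_assoc]
        _ = (j : K) * c := by rw [h3, map_nsmul, nsmul_eq_mul, hc]
    have hB : (n : K) * c = (r : K) * coeff r (Q ^ n) := by
      have h4 : X * d⁄dX K (Q ^ n) = n • T := by
        rw [leibniz_pow' Q n, mul_smul_comm]
        congr 1
        rw [hT, mul_comm (Q ^ (n - 1))]
      have h5 := coeff_X_mul_derivative (Q ^ n) r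
      rw [h4, map_nsmul, nsmul_eq_mul, ← hc] at h5
      rw [h5]
    have hE1 : coeff n (H ^ j) = (r : K)⁻¹ * ((j : K) * c) := by
      rw [hHj, coeff_pcomp, ← hA, Finset.mul_sum]
      refine Finset.sum_congr rfl fun m hm => ?_
      rw [mem_range, Nat.lt_succ_iff] at hm
      rcases Nat.eq_zero_or_pos m with rfl | hmpos
      · rw [pow_zero, PowerSeries.coeff_one, if_neg hrpos.ne', mul_zero,
          Nat.cast_zero, zero_mul, zero_mul, mul_zero]
      · have hIH := IH r (by omega) m hmpos (by omega)
        have : coeff r (H ^ m) = (r : K)⁻¹ * ((m : K) * coeff (r - m) (Q ^ r)) := by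
          field_simp
          linear_combination hIH
        rw [this]
        ring
    rw [hE1]
    field_simp
    linear_combination (j : K) * hB

lemma key [CharZero K] (Q H : PowerSeries K)
    (hQ1 : constantCoeff Q = 1) (hH0 : constantCoeff H = 0)
    (hH : H = X * pcomp Q H) (A : PowerSeries K) (m : ℕ) :
    coeff m (pcomp A H * d⁄dX K H) = coeff m (A * Q ^ (m + 1)) := by
  rw [coeff_pcomp_mul hH0, PowerSeries.coeff_mul,
    Finset.Nat.sum_antidiagonal_eq_sum_range_succ_mk]
  refine Finset.sum_congr rfl fun k hk => ?_
  rw [mem_range, Nat.lt_succ_iff] at hk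
  congr 1
  have h1 := coeff_pow_mul_deriv H k m
  have h2 := lagrange Q H hQ1 hH0 hH (m + 1) (k + 1) (by omega) (by omega)
  rw [show m + 1 - (k + 1) = m - k by omega] at h2
  push_cast at h1 h2
  have hk1 : ((k : K) + 1) ≠ 0 := by
    have := Nat.cast_add_one_ne_zero (R := K) k
    push_cast at this; exact this
  refine mul_left_cancel₀ hk1 ?_
  linear_combination h1 + h2

lemma dlog_mul [CharZero K] : d⁄dX K (logSeries K) * (1 + X) = 1 := by
  ext n
  rw [mul_add, mul_one, map_add]
  rcases n with _ | n
  · rw [coeff_zero_mul_X, add_zero, coeff_derivative]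
    simp [logSeries]
  · rw [PowerSeries.coeff_succ_mul_X, coeff_derivative, coeff_derivative]
    have h1 : ((n : K) + 1) ≠ 0 := by
      have := Nat.cast_add_one_ne_zero (R := K) n; push_cast at this; exact this
    have h2 : (2 + (n : K)) ≠ 0 := by
      have h3 := Nat.cast_add_one_ne_zero (R := K) (n + 1); push_cast at h3
      exact fun h => h3 (by linear_combination h)
    simp only [logSeries, coeff_mk, PowerSeries.coeff_one, Nat.succ_ne_zero, if_neg,
      Nat.add_eq, pow_succ]
    push_cast
    have hi : (1 + (n : K)) * (1 + (n : K))⁻¹ = 1 :=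
      mul_inv_cancel₀ (by exact fun h => h1 (by linear_combination h))
    have hi2 : (2 + (n : K)) * (2 + (n : K))⁻¹ = 1 := mul_inv_cancel₀ h2
    linear_combination ((-1 : K) ^ n) * hi + (-(-1 : K) ^ n) * hi2

lemma dexp [CharZero K] : d⁄dX K (expSeries K) = expSeries K := by
  ext n
  rw [coeff_derivative]
  simp only [expSeries, coeff_mk, Nat.factorial_succ]
  have h1 : ((n : K) + 1) ≠ 0 := by
    have := Nat.cast_add_one_ne_zero (R := K) n; push_cast at this; exact this
  have h2 : ((n.factorial : K)) ≠ 0 := Nat.cast_ne_zero.mpr n.factorial_ne_zero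
  push_cast
  rw [mul_inv]
  field_simp

lemma derivative_logS [CharZero K] {G : PowerSeries K}
    (hG1 : constantCoeff G = 1) :
    d⁄dX K (logS G) = G⁻¹ * d⁄dX K G := by
  have h0 : constantCoeff (G - 1) = 0 := by
    rw [map_sub, hG1, map_one, sub_self]
  have hGne : constantCoeff G ≠ 0 := by rw [hG1]; exact one_ne_zero
  have hd1 : d⁄dX K (G - 1) = d⁄dX K G := by
    rw [map_sub, Derivation.map_one_eq_zero, sub_zero]
  have hpc : pcomp (1 + X) (G - 1) = G := by
    rw [pcomp_add, pcomp_one, pcomp_X h0]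
    ring
  have hmul : pcomp (d⁄dX K (logSeries K)) (G - 1) * G = 1 := by
    calc pcomp (d⁄dX K (logSeries K)) (G - 1) * G
        = pcomp (d⁄dX K (logSeries K)) (G - 1) * pcomp (1 + X) (G - 1) := by rw [hpc]
      _ = pcomp (d⁄dX K (logSeries K) * (1 + X)) (G - 1) := (pcomp_mul h0 _ _).symm
      _ = pcomp 1 (G - 1) := by rw [dlog_mul]
      _ = 1 := pcomp_one _
  have hinv : G⁻¹ = pcomp (d⁄dX K (logSeries K)) (G - 1) :=
    (PowerSeries.inv_eq_iff_mul_eq_one hGne).mpr hmul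
  rw [logS, pcomp_derivative h0, hd1, hinv]

lemma derivative_expS [CharZero K] {f : PowerSeries K}
    (hf0 : constantCoeff f = 0) :
    d⁄dX K (expS f) = expS f * d⁄dX K f := by
  rw [expS, pcomp_derivative hf0, dexp]

lemma constantCoeff_expS [CharZero K] (f : PowerSeries K) :
    constantCoeff (expS f) = 1 := by
  rw [expS, constantCoeff_pcomp, ← coeff_zero_eq_constantCoeff]
  simp [expSeries]

end LagAux

open LagAux Finset in
/-- Let `K` be a field of characteristic zero, `Q ∈ K[[z]]` with
constant term `1`, and let `H ∈ K[[q]]` be the formal power series with zero constant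
term satisfying `H = q·Q(H)`.  Writing `H = q·G` (i.e. `G = H/q`), the power series
`H/q` has constant term `1`, `log (H/q) = Σ_{m≥1} (1/m)·[z^m]{Q(z)^m}·q^m`, and
equivalently `H = q·exp (Σ_{m≥1} (1/m)·[z^m]{Q(z)^m}·q^m)`. -/
theorem stmt5 {K : Type*} [Field K] [CharZero K] (Q H : PowerSeries K)
    (hQ1 : PowerSeries.constantCoeff Q = 1)
    (hH0 : PowerSeries.constantCoeff H = 0)
    (hH : H = PowerSeries.X * pcomp Q H)
    (G : PowerSeries K) (hG : H = PowerSeries.X * G) :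
    PowerSeries.constantCoeff G = 1 ∧
    logS G = PowerSeries.mk (fun m => (m : K)⁻¹ * PowerSeries.coeff m (Q ^ m)) ∧
    H = PowerSeries.X *
      expS (PowerSeries.mk fun m => (m : K)⁻¹ * PowerSeries.coeff m (Q ^ m)) := by
  have hGQ : G = pcomp Q H := mul_left_cancel₀ PowerSeries.X_ne_zero (hG.symm.trans hH)
  have hG1 : constantCoeff G = 1 := by rw [hGQ, constantCoeff_pcomp, hQ1]
  have hQne : constantCoeff Q ≠ 0 := by rw [hQ1]; exact one_ne_zero
  have hGne : constantCoeff G ≠ 0 := by rw [hG1]; exact one_ne_zero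
  -- part 2
  have part2 : logS G = PowerSeries.mk (fun m => (m : K)⁻¹ * PowerSeries.coeff m (Q ^ m)) := by
    ext n
    rcases n with _ | m
    · rw [logS, coeff_pcomp, coeff_mk]
      simp [logSeries]
    · have hdl : d⁄dX K (logS G) = G⁻¹ * d⁄dX K G := derivative_logS hG1
      have e0 : coeff (m + 1) (logS G) * ((m : K) + 1) = coeff m (G⁻¹ * d⁄dX K G) := by
        rw [← hdl, coeff_derivative]
      have e1 : G⁻¹ * d⁄dX K G = pcomp (Q⁻¹ * d⁄dX K Q) H * d⁄dX K H := by
        rw [hGQ, pcomp_derivative hH0, ← pcomp_inv hH0 hQne, pcomp_mul hH0]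
        ring
      have e2 := key Q H hQ1 hH0 hH (Q⁻¹ * d⁄dX K Q) m
      have e3 : Q⁻¹ * d⁄dX K Q * Q ^ (m + 1) = d⁄dX K Q * Q ^ m := by
        have hQQ : Q⁻¹ * Q = 1 := by
          rw [mul_comm]; exact PowerSeries.mul_inv_cancel Q hQne
        calc Q⁻¹ * d⁄dX K Q * Q ^ (m + 1)
            = (Q⁻¹ * Q) * (d⁄dX K Q * Q ^ m) := by ring
          _ = d⁄dX K Q * Q ^ m := by rw [hQQ, one_mul]
      have e4 : ((m : K) + 1) * coeff m (d⁄dX K Q * Q ^ m)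
          = ((m : K) + 1) * coeff (m + 1) (Q ^ (m + 1)) := by
        have h4 : X * d⁄dX K (Q ^ (m + 1)) = (m + 1) • (X * (d⁄dX K Q * Q ^ m)) := by
          rw [leibniz_pow' Q (m + 1), Nat.add_sub_cancel, mul_smul_comm]
          congr 1
          rw [mul_comm (Q ^ m)]
        have h5 := coeff_X_mul_derivative (Q ^ (m + 1)) (m + 1)
        rw [h4, map_nsmul, nsmul_eq_mul, coeff_succ_X_mul] at h5
        push_cast at h5 ⊢
        linear_combination h5
      have hm1 : ((m : K) + 1) ≠ 0 := by
        have := Nat.cast_add_one_ne_zero (R := K) m; push_cast at this; exact this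
      have e5 : coeff m (d⁄dX K Q * Q ^ m) = coeff (m + 1) (Q ^ (m + 1)) :=
        mul_left_cancel₀ hm1 e4
      rw [coeff_mk]
      have : coeff (m + 1) (logS G) * ((m : K) + 1) = coeff (m + 1) (Q ^ (m + 1)) := by
        rw [e0, e1, e2, e3, e5]
      push_cast
      field_simp
      linear_combination this
  refine ⟨hG1, part2, ?_⟩
  -- part 3
  set S : PowerSeries K := PowerSeries.mk (fun m => (m : K)⁻¹ * PowerSeries.coeff m (Q ^ m))
    with hSdef
  have hS0 : constantCoeff S = 0 := by
    rw [hSdef, ← coeff_zero_eq_constantCoeff, coeff_mk]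
    simp
  have hdS : d⁄dX K S = G⁻¹ * d⁄dX K G := by
    rw [← part2]; exact derivative_logS hG1
  set E : PowerSeries K := expS S with hEdef
  have hE0 : constantCoeff E = 1 := constantCoeff_expS S
  have hdE : d⁄dX K E = E * (G⁻¹ * d⁄dX K G) := by
    rw [hEdef, derivative_expS hS0, hdS]
  have hDzero : d⁄dX K (E * G⁻¹) = 0 := by
    rw [Derivation.leibniz, smul_eq_mul, smul_eq_mul, derivative_inv', hdE]
    ring
  have hD1 : E * G⁻¹ = 1 := by
    refine PowerSeries.derivative.ext ?_ ?_
    · rw [hDzero, Derivation.map_one_eq_zero]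
    · rw [map_mul, hE0, PowerSeries.constantCoeff_inv, hG1, one_mul, inv_one, map_one]
  have hEG : E = G := by
    have hQQ : G⁻¹ * G = 1 := by
      rw [mul_comm]; exact PowerSeries.mul_inv_cancel G hGne
    calc E = E * (G⁻¹ * G) := by rw [hQQ, mul_one]
      _ = (E * G⁻¹) * G := by ring
      _ = G := by rw [hD1, one_mul]
  rw [hG, hEG]
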